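/- Let H ∈ E satisfy ⟨α, H⟩ ≤ π for every α ∈ Φ. Then the set of focal equivalents of H with respect to Γ₀, namely {Y ∈ E : Y − H ∈ Γ₀ and ‖Y‖ = ‖H‖}, equals the orbit of H under the subgroup W₀(H), i.e. {w H : w ∈ W₀(H)}. -/

import Mathlib

open scoped RealInnerProductSpace

section SteinbergAux
variable {E : Type*} [NormedAddCommGroup E] [InnerProductSpace ℝ E]






private lemma stb_sq_eq {a b : ℝ} (ha : 0 ≤ a) (hb : 0 ≤ b) (h : a ^ 2 = b ^ 2) : a = b := by
  nlinarith

/-- The reflection in the hyperplane orthogonal to `α`, as a linear map. -/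
noncomputable def stbRefl (α : E) : E →ₗ[ℝ] E where
  toFun x := x - (2 * ⟪x, α⟫ / ⟪α, α⟫) • α
  map_add' x y := by
    rw [inner_add_left]
    rw [show (2 * (⟪x, α⟫ + ⟪y, α⟫) / ⟪α, α⟫ : ℝ) = 2 * ⟪x, α⟫ / ⟪α, α⟫ + 2 * ⟪y, α⟫ / ⟪α, α⟫ by ring]
    rw [add_smul]
    abel
  map_smul' c x := by
    simp only [RingHom.id_apply, real_inner_smul_left, smul_sub]
    rw [show (2 * (c * ⟪x, α⟫) / ⟪α, α⟫ : ℝ) = c * (2 * ⟪x, α⟫ / ⟪α, α⟫) by ring, smul_smul]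

lemma stbRefl_apply (α x : E) : stbRefl α x = x - (2 * ⟪x, α⟫ / ⟪α, α⟫) • α := rfl

lemma stbRefl_inner (α : E) (hα : (⟪α, α⟫ : ℝ) ≠ 0) (x y : E) :
    (⟪stbRefl α x, stbRefl α y⟫ : ℝ) = ⟪x, y⟫ := by
  simp only [stbRefl_apply, inner_sub_left, inner_sub_right, real_inner_smul_left,
    real_inner_smul_right]
  field_simp
  rw [real_inner_comm α y, real_inner_comm α x]
  ring

lemma stbRefl_norm (α : E) (hα : (⟪α, α⟫ : ℝ) ≠ 0) (x : E) : ‖stbRefl α x‖ = ‖x‖ := by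
  apply stb_sq_eq (norm_nonneg _) (norm_nonneg _)
  rw [← real_inner_self_eq_norm_sq, ← real_inner_self_eq_norm_sq, stbRefl_inner α hα]

lemma stbRefl_invol (α : E) (hα : (⟪α, α⟫ : ℝ) ≠ 0) : Function.Involutive (stbRefl α) := by
  intro x
  simp only [stbRefl_apply, inner_sub_left, real_inner_smul_left, smul_sub]
  have : (2 * (⟪x, α⟫ - 2 * ⟪x, α⟫ / ⟪α, α⟫ * ⟪α, α⟫) / ⟪α, α⟫ : ℝ) =
      - (2 * ⟪x, α⟫ / ⟪α, α⟫) := by field_simp; ring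
  rw [this]
  simp [sub_eq_add_neg, neg_smul, smul_smul]

/-- The reflection as a linear equivalence. -/
noncomputable def stbReflE (α : E) (hα : (⟪α, α⟫ : ℝ) ≠ 0) : E ≃ₗ[ℝ] E :=
  LinearEquiv.ofInvolutive (stbRefl α) (stbRefl_invol α hα)

lemma stbReflE_apply (α : E) (hα : (⟪α, α⟫ : ℝ) ≠ 0) (x : E) :
    stbReflE α hα x = x - (2 * ⟪x, α⟫ / ⟪α, α⟫) • α := rfl





noncomputable def stbPC (α : E) : E := (2 * Real.pi / ⟪α, α⟫) • α

variable (Φ : Finset E)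

lemma stb_inner_pos (hne : ∀ α ∈ Φ, α ≠ 0) {α : E} (hα : α ∈ Φ) : (0:ℝ) < ⟪α, α⟫ := by
  rw [real_inner_self_eq_norm_sq]
  exact pow_pos (norm_pos_iff.2 (hne α hα)) 2

lemma stb_neg_mem (hne : ∀ α ∈ Φ, α ≠ 0)
    (hrefl : ∀ α ∈ Φ, ∀ β ∈ Φ, β - (2 * ⟪β, α⟫ / ⟪α, α⟫) • α ∈ Φ)
    {α : E} (hα : α ∈ Φ) : -α ∈ Φ := by
  have h := hrefl α hα α hα
  have hA := (stb_inner_pos Φ hne hα).ne'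
  rw [show (2 * ⟪α, α⟫ / ⟪α, α⟫ : ℝ) = 2 by field_simp] at h
  rw [show α - (2:ℝ) • α = -α by rw [two_smul]; abel] at h
  exact h

lemma stb_inner_pc (α : E) (x : E) : (⟪x, stbPC α⟫ : ℝ) = (2 * Real.pi / ⟪α, α⟫) * ⟪x, α⟫ := by
  simp [stbPC, real_inner_smul_right]

lemma stb_pc_self (α : E) (hα : (⟪α, α⟫:ℝ) ≠ 0) : (⟪α, stbPC α⟫ : ℝ) = 2 * Real.pi := by
  rw [stb_inner_pc]; field_simp

lemma stb_pc_neg (α : E) : stbPC (-α) = - stbPC α := by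
  simp [stbPC, inner_neg_neg]

/-- integrality: every element of `Γ₀` pairs with every root in `π ℤ`. -/
lemma stb_gen_int
    (hne : ∀ α ∈ Φ, α ≠ 0)
    (hint : ∀ α ∈ Φ, ∀ β ∈ Φ, ∃ n : ℤ, 2 * ⟪β, α⟫ / ⟪α, α⟫ = (n : ℝ))
    {α : E} (hα : α ∈ Φ) {δ : E}
    (hδ : δ ∈ AddSubgroup.closure ((fun α : E => (2 * Real.pi / ⟪α, α⟫) • α) '' Φ)) :
    ∃ n : ℤ, (⟪α, δ⟫ : ℝ) = n * Real.pi := by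
  induction hδ using AddSubgroup.closure_induction with
  | mem ψ hψ =>
    obtain ⟨β, hβ, rfl⟩ := hψ
    obtain ⟨n, hn⟩ := hint β hβ α hα
    refine ⟨n, ?_⟩
    rw [real_inner_smul_right, ← hn]
    have hB := (stb_inner_pos Φ hne hβ).ne'
    field_simp
  | zero => exact ⟨0, by simp⟩
  | add x y hx hy ihx ihy =>
    obtain ⟨n, hn⟩ := ihx; obtain ⟨m, hm⟩ := ihy
    exact ⟨n + m, by rw [inner_add_right, hn, hm]; push_cast; ring⟩
  | neg x hx ihx =>
    obtain ⟨n, hn⟩ := ihx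
    exact ⟨-n, by rw [inner_neg_right, hn]; push_cast; ring⟩

/-- representation of lattice elements as multiset sums of the generators. -/
lemma stb_rep
    (hne : ∀ α ∈ Φ, α ≠ 0)
    (hrefl : ∀ α ∈ Φ, ∀ β ∈ Φ, β - (2 * ⟪β, α⟫ / ⟪α, α⟫) • α ∈ Φ)
    {δ : E}
    (hδ : δ ∈ AddSubgroup.closure ((fun α : E => (2 * Real.pi / ⟪α, α⟫) • α) '' Φ)) :
    ∃ s : Multiset E, (∀ ψ ∈ s, ∃ α ∈ Φ, ψ = stbPC α) ∧ s.sum = δ := by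
  induction hδ using AddSubgroup.closure_induction with
  | mem ψ hψ =>
    obtain ⟨β, hβ, rfl⟩ := hψ
    exact ⟨{(2 * Real.pi / ⟪β, β⟫) • β}, by
      simp only [Multiset.mem_singleton]
      rintro ψ rfl
      exact ⟨β, hβ, rfl⟩, by simp⟩
  | zero => exact ⟨0, by simp, by simp⟩
  | add x y hx hy ihx ihy =>
    obtain ⟨s, hs, hssum⟩ := ihx; obtain ⟨t, ht, htsum⟩ := ihy
    refine ⟨s + t, ?_, by rw [Multiset.sum_add, hssum, htsum]⟩
    intro ψ hψ
    rcases Multiset.mem_add.1 hψ with h | h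
    · exact hs ψ h
    · exact ht ψ h
  | neg x hx ihx =>
    obtain ⟨s, hs, hssum⟩ := ihx
    refine ⟨s.map (fun y => -y), ?_, ?_⟩
    · intro ψ hψ
      obtain ⟨y, hy, rfl⟩ := Multiset.mem_map.1 hψ
      obtain ⟨β, hβ, rfl⟩ := hs y hy
      exact ⟨-β, stb_neg_mem Φ hne hrefl hβ, (stb_pc_neg β).symm⟩
    · rw [show (fun y : E => -y) = (fun y : E => -(id y)) by rfl]
      rw [Multiset.sum_map_neg]
      simp [hssum]






lemma stb_inner_multiset_sum (x : E) (s : Multiset E) :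
    (⟪x, s.sum⟫ : ℝ) = (s.map (fun y => (⟪x, y⟫ : ℝ))).sum := by
  induction s using Multiset.induction with
  | empty => simp
  | cons a t ih => simp [inner_add_right, ih]

/-- sum of two coroot generators with negative inner product is `0` or a coroot generator. -/
lemma stb_two_sum
    (hne : ∀ α ∈ Φ, α ≠ 0)
    (hrefl : ∀ α ∈ Φ, ∀ β ∈ Φ, β - (2 * ⟪β, α⟫ / ⟪α, α⟫) • α ∈ Φ)
    (hint : ∀ α ∈ Φ, ∀ β ∈ Φ, ∃ n : ℤ, 2 * ⟪β, α⟫ / ⟪α, α⟫ = (n : ℝ))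
    {α β : E} (hα : α ∈ Φ) (hβ : β ∈ Φ) (hαβ : (⟪α, β⟫ : ℝ) < 0) :
    stbPC α + stbPC β = 0 ∨ ∃ γ ∈ Φ, stbPC α + stbPC β = stbPC γ := by
  have hA : (0:ℝ) < ⟪α, α⟫ := by
    rw [real_inner_self_eq_norm_sq]; exact pow_pos (norm_pos_iff.2 (hne α hα)) 2
  have hB : (0:ℝ) < ⟪β, β⟫ := by
    rw [real_inner_self_eq_norm_sq]; exact pow_pos (norm_pos_iff.2 (hne β hβ)) 2
  have hπ := Real.pi_pos
  obtain ⟨na, hna⟩ := hint α hα β hβ   -- 2⟪β,α⟫/⟪α,α⟫ = na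
  obtain ⟨nb, hnb⟩ := hint β hβ α hα   -- 2⟪α,β⟫/⟪β,β⟫ = nb
  have hba : (⟪β, α⟫ : ℝ) = ⟪α, β⟫ := real_inner_comm _ _
  have hna_neg : na < 0 := by
    have : (na : ℝ) < 0 := by rw [← hna, hba]; exact div_neg_of_neg_of_pos (by linarith) hA
    exact_mod_cast this
  have hnb_neg : nb < 0 := by
    have : (nb : ℝ) < 0 := by rw [← hnb]; exact div_neg_of_neg_of_pos (by linarith) hB
    exact_mod_cast this
  by_cases hcb : nb = -1
  · -- γ = r_α β
    right
    refine ⟨β - (2 * ⟪β, α⟫ / ⟪α, α⟫) • α, hrefl α hα β hβ, ?_⟩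
    have hγγ : (⟪β - (2 * ⟪β, α⟫ / ⟪α, α⟫) • α, β - (2 * ⟪β, α⟫ / ⟪α, α⟫) • α⟫ : ℝ) = ⟪β, β⟫ := by
      have := stbRefl_inner α hA.ne' β β
      simpa [stbRefl_apply] using this
    have hkey : (2 * Real.pi / ⟪β, β⟫) * (2 * ⟪β, α⟫ / ⟪α, α⟫) = - (2 * Real.pi / ⟪α, α⟫) := by
      have h1 : (⟪α, β⟫ : ℝ) = (nb : ℝ) * ⟪β, β⟫ / 2 := by
        field_simp at hnb ⊢; linarith
      rw [hba, h1, hcb]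
      push_cast
      field_simp
    simp only [stbPC]
    rw [hγγ, smul_sub, smul_smul, hkey, neg_smul, sub_neg_eq_add, add_comm]
  · by_cases hca : na = -1
    · -- γ = r_β α
      right
      refine ⟨α - (2 * ⟪α, β⟫ / ⟪β, β⟫) • β, hrefl β hβ α hα, ?_⟩
      have hγγ : (⟪α - (2 * ⟪α, β⟫ / ⟪β, β⟫) • β, α - (2 * ⟪α, β⟫ / ⟪β, β⟫) • β⟫ : ℝ) = ⟪α, α⟫ := by
        have := stbRefl_inner β hB.ne' α α
        simpa [stbRefl_apply] using this
      have hkey : (2 * Real.pi / ⟪α, α⟫) * (2 * ⟪α, β⟫ / ⟪β, β⟫) = - (2 * Real.pi / ⟪β, β⟫) := by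
        have h1 : (⟪β, α⟫ : ℝ) = (na : ℝ) * ⟪α, α⟫ / 2 := by
          field_simp at hna ⊢; linarith
        rw [← hba, h1, hca]
        push_cast
        field_simp
      simp only [stbPC]
      rw [hγγ, smul_sub, smul_smul, hkey, neg_smul, sub_neg_eq_add]
    · -- na, nb ≤ -2 : forces α + β = 0
      left
      have hna2 : na ≤ -2 := by omega
      have hnb2 : nb ≤ -2 := by omega
      have hprod : (na : ℝ) * nb ≤ 4 := by
        rw [← hna, ← hnb]
        have hcs := real_inner_mul_inner_self_le α β
        rw [hba, div_mul_div_comm, div_le_iff₀ (by positivity)]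
        nlinarith [hcs]
      have h4 : na * nb = 4 := by
        have h1 : (4:ℤ) ≤ na * nb := by nlinarith
        have h2 : na * nb ≤ 4 := by exact_mod_cast hprod
        omega
      have hsum : -4 ≤ na + nb := by nlinarith
      have hna3 : na = -2 := by omega
      have hnb3 : nb = -2 := by omega
      have e1 : (⟪β, α⟫ : ℝ) = - ⟪α, α⟫ := by
        rw [hna3] at hna; push_cast at hna; field_simp at hna; linarith
      have e2 : (⟪α, β⟫ : ℝ) = - ⟪β, β⟫ := by
        rw [hnb3] at hnb; push_cast at hnb; field_simp at hnb; linarith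
      have hzero : α + β = 0 := by
        have : (⟪α + β, α + β⟫ : ℝ) = 0 := by
          rw [inner_add_add_self]
          rw [e1] at hba
          linarith [hba, e2]
        exact inner_self_eq_zero.1 this
      have hβα : β = -α := eq_neg_of_add_eq_zero_right hzero
      subst hβα
      simp [stbPC, inner_neg_neg]


/-- every nonzero lattice element has pairing `≥ 2π` with some root. -/
lemma stb_minuscule
    (hne : ∀ α ∈ Φ, α ≠ 0)
    (hrefl : ∀ α ∈ Φ, ∀ β ∈ Φ, β - (2 * ⟪β, α⟫ / ⟪α, α⟫) • α ∈ Φ)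
    (hint : ∀ α ∈ Φ, ∀ β ∈ Φ, ∃ n : ℤ, 2 * ⟪β, α⟫ / ⟪α, α⟫ = (n : ℝ))
    {δ : E}
    (hδ : δ ∈ AddSubgroup.closure ((fun α : E => (2 * Real.pi / ⟪α, α⟫) • α) '' Φ))
    (hδ0 : δ ≠ 0) :
    ∃ α ∈ Φ, 2 * Real.pi ≤ ⟪α, δ⟫ := by
  classical
  have hπ := Real.pi_pos
  obtain ⟨s, hsG, hsum⟩ := stb_rep Φ hne hrefl hδ
  subst hsum
  have key : ∀ n : ℕ, ∀ s : Multiset E, s.card ≤ n → (∀ ψ ∈ s, ∃ α ∈ Φ, ψ = stbPC α) →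
      s.sum ≠ 0 → ∃ α ∈ Φ, 2 * Real.pi ≤ ⟪α, s.sum⟫ := by
    intro n
    induction n with
    | zero =>
      intro s hcard _ hs0
      rw [Nat.le_zero, Multiset.card_eq_zero] at hcard
      exact absurd (by simp [hcard]) hs0
    | succ n ih =>
      intro s hcard hsG hs0
      by_cases hpair : ∃ a ∈ s, ∃ b ∈ s.erase a, (⟪a, b⟫ : ℝ) < 0
      · obtain ⟨a, ha, b, hb, hab⟩ := hpair
        obtain ⟨α, hαΦ, rfl⟩ := hsG a ha
        obtain ⟨β, hβΦ, rfl⟩ := hsG b (Multiset.mem_of_mem_erase hb)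
        have hA : (0:ℝ) < ⟪α, α⟫ := stb_inner_pos Φ hne hαΦ
        have hB : (0:ℝ) < ⟪β, β⟫ := stb_inner_pos Φ hne hβΦ
        have hαβ : (⟪α, β⟫ : ℝ) < 0 := by
          have heq : (⟪stbPC α, stbPC β⟫ : ℝ)
              = (2 * Real.pi / ⟪α, α⟫) * ((2 * Real.pi / ⟪β, β⟫) * ⟪α, β⟫) := by
            simp [stbPC, real_inner_smul_left, real_inner_smul_right]; ring
          rw [heq] at hab
          by_contra hcon
          push_neg at hcon
          have : (0:ℝ) ≤ (2 * Real.pi / ⟪α, α⟫) * ((2 * Real.pi / ⟪β, β⟫) * ⟪α, β⟫) := by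
            positivity
          linarith
        set t := (s.erase (stbPC α)).erase (stbPC β) with ht
        have hsum1 : s.sum = stbPC α + (s.erase (stbPC α)).sum := by
          conv_lhs => rw [← Multiset.cons_erase ha]
          rw [Multiset.sum_cons]
        have hsum2 : (s.erase (stbPC α)).sum = stbPC β + t.sum := by
          conv_lhs => rw [← Multiset.cons_erase hb]
          rw [Multiset.sum_cons]
        have hsum3 : s.sum = stbPC α + stbPC β + t.sum := by
          rw [hsum1, hsum2]; abel
        have hcard1 : (s.erase (stbPC α)).card = s.card - 1 := Multiset.card_erase_of_mem ha
        have hcard2 : t.card = (s.erase (stbPC α)).card - 1 := Multiset.card_erase_of_mem hb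
        have hcard0 : 1 ≤ (s.erase (stbPC α)).card :=
          Multiset.card_pos_iff_exists_mem.2 ⟨_, hb⟩
        have hcard0' : 1 ≤ s.card := Multiset.card_pos_iff_exists_mem.2 ⟨_, ha⟩
        have htmem : ∀ ψ ∈ t, ∃ α ∈ Φ, ψ = stbPC α := fun ψ hψ =>
          hsG ψ (Multiset.mem_of_mem_erase (Multiset.mem_of_mem_erase hψ))
        rcases stb_two_sum Φ hne hrefl hint hαΦ hβΦ hαβ with hz | ⟨γ, hγΦ, hγ⟩
        · -- the two generators cancel
          have hts : t.sum = s.sum := by rw [hsum3, hz, zero_add]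
          have := ih t (by omega) htmem (by rw [hts]; exact hs0)
          rwa [hts] at this
        · -- combine into a single generator
          have := ih (stbPC γ ::ₘ t) (by rw [Multiset.card_cons]; omega)
            (by
              intro ψ hψ
              rcases Multiset.mem_cons.1 hψ with rfl | hψt
              · exact ⟨γ, hγΦ, rfl⟩
              · exact htmem ψ hψt)
            (by rw [Multiset.sum_cons, ← hγ, ← hsum3]; exact hs0)
          rwa [Multiset.sum_cons, ← hγ, ← hsum3] at this
      · push_neg at hpair
        have hs0' : s ≠ 0 := by
          intro hc
          exact hs0 (by simp [hc])
        obtain ⟨ψ, hψ⟩ := Multiset.exists_mem_of_ne_zero hs0'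
        obtain ⟨α, hαΦ, rfl⟩ := hsG ψ hψ
        have hA : (0:ℝ) < ⟪α, α⟫ := stb_inner_pos Φ hne hαΦ
        refine ⟨α, hαΦ, ?_⟩
        have hsum1 : s.sum = stbPC α + (s.erase (stbPC α)).sum := by
          conv_lhs => rw [← Multiset.cons_erase hψ]
          rw [Multiset.sum_cons]
        rw [hsum1, inner_add_right, stb_pc_self α hA.ne']
        have hrest : (0:ℝ) ≤ ⟪α, (s.erase (stbPC α)).sum⟫ := by
          rw [stb_inner_multiset_sum]
          apply Multiset.sum_nonneg
          intro r hr
          obtain ⟨b, hbmem, rfl⟩ := Multiset.mem_map.1 hr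
          have h1 : (0:ℝ) ≤ ⟪stbPC α, b⟫ := hpair _ hψ b hbmem
          have h2 : (⟪stbPC α, b⟫ : ℝ) = (2 * Real.pi / ⟪α, α⟫) * ⟪α, b⟫ := by
            simp [stbPC, real_inner_smul_left]
          rw [h2] at h1
          nlinarith [div_pos (by linarith : (0:ℝ) < 2 * Real.pi) hA]
        linarith
  exact key s.card s le_rfl hsG hδ0

/-- the Voronoi-type inequality: `⟪H, δ⟫ ≥ -⟪δ,δ⟫/2` for all lattice vectors `δ`. -/
lemma stb_voronoi
    (hne : ∀ α ∈ Φ, α ≠ 0)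
    (hrefl : ∀ α ∈ Φ, ∀ β ∈ Φ, β - (2 * ⟪β, α⟫ / ⟪α, α⟫) • α ∈ Φ)
    (hint : ∀ α ∈ Φ, ∀ β ∈ Φ, ∃ n : ℤ, 2 * ⟪β, α⟫ / ⟪α, α⟫ = (n : ℝ))
    (H : E) (hH : ∀ α ∈ Φ, ⟪α, H⟫ ≤ Real.pi)
    {δ : E}
    (hδ : δ ∈ AddSubgroup.closure ((fun α : E => (2 * Real.pi / ⟪α, α⟫) • α) '' Φ)) :
    -(⟪δ, δ⟫ : ℝ) / 2 ≤ ⟪H, δ⟫ := by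
  have hπ := Real.pi_pos
  rcases eq_or_ne δ 0 with rfl | hδ0
  · simp
  have hΦne : Φ.Nonempty := by
    rcases Φ.eq_empty_or_nonempty with h | h
    · subst h
      simp only [Finset.coe_empty, Set.image_empty, AddSubgroup.closure_empty,
        AddSubgroup.mem_bot] at hδ
      exact absurd hδ hδ0
    · exact h
  set C := Φ.sup' hΦne (fun α => (⟪α, α⟫ : ℝ)) with hC
  have hCb : ∀ α ∈ Φ, (⟪α, α⟫ : ℝ) ≤ C := fun α hα => Finset.le_sup' (fun β => (⟪β, β⟫ : ℝ)) hα
  have hCpos : (0:ℝ) < C := by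
    obtain ⟨α₀, hα₀⟩ := hΦne
    exact lt_of_lt_of_le (stb_inner_pos Φ hne hα₀) (hCb α₀ hα₀)
  set ε := 4 * Real.pi ^ 2 / C with hε
  have hεpos : (0:ℝ) < ε := by positivity
  obtain ⟨N, hN⟩ := exists_nat_ge ((⟪δ, δ⟫ : ℝ) / ε)
  have hbound : (⟪δ, δ⟫ : ℝ) ≤ N * ε := by
    rw [div_le_iff₀ hεpos] at hN
    linarith
  clear hN
  have key : ∀ n : ℕ, ∀ δ : E,
      δ ∈ AddSubgroup.closure ((fun α : E => (2 * Real.pi / ⟪α, α⟫) • α) '' Φ) →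
      (⟪δ, δ⟫ : ℝ) ≤ n * ε → -(⟪δ, δ⟫ : ℝ) / 2 ≤ ⟪H, δ⟫ := by
    intro n
    induction n with
    | zero =>
      intro δ hδ hb
      have h0 : (⟪δ, δ⟫ : ℝ) = 0 := le_antisymm (by simpa using hb)
        (by rw [real_inner_self_eq_norm_sq]; positivity)
      have : δ = 0 := inner_self_eq_zero.1 h0
      subst this
      simp
    | succ n ih =>
      intro δ hδ hb
      rcases eq_or_ne δ 0 with rfl | hδ0
      · simp
      obtain ⟨α, hα, hg⟩ := stb_minuscule Φ hne hrefl hint hδ hδ0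
      have hA : (0:ℝ) < ⟪α, α⟫ := stb_inner_pos Φ hne hα
      set q := 2 * Real.pi / (⟪α, α⟫ : ℝ) with hq
      have hqpos : 0 < q := by positivity
      have hqA : q * ⟪α, α⟫ = 2 * Real.pi := by rw [hq]; field_simp
      set g := (⟪α, δ⟫ : ℝ) with hgdef
      have hδ'mem : δ - stbPC α ∈
          AddSubgroup.closure ((fun α : E => (2 * Real.pi / ⟪α, α⟫) • α) '' Φ) := by
        refine sub_mem hδ (AddSubgroup.subset_closure ?_)
        exact ⟨α, hα, rfl⟩
      have e1 : (⟪δ - stbPC α, δ - stbPC α⟫ : ℝ) = ⟪δ, δ⟫ - 2 * q * g + 2 * Real.pi * q := by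
        rw [inner_sub_sub_self]
        have h1 : (⟪δ, stbPC α⟫ : ℝ) = q * g := by
          rw [stbPC, real_inner_smul_right, ← hq, hgdef, real_inner_comm]
        have h1' : (⟪stbPC α, δ⟫ : ℝ) = q * g := by
          rw [stbPC, real_inner_smul_left, ← hq, hgdef]
        have h2 : (⟪stbPC α, stbPC α⟫ : ℝ) = q * (q * ⟪α, α⟫) := by
          rw [stbPC, real_inner_smul_left, real_inner_smul_right, ← hq]
        rw [h1, h1', h2, hqA]
        ring
      have hdrop : (4:ℝ) * Real.pi ^ 2 / ⟪α, α⟫ ≤ 2 * q * g - 2 * Real.pi * q := by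
        have h1 : 2 * q * Real.pi ≤ 2 * q * (g - Real.pi) := by nlinarith
        have h2 : (4:ℝ) * Real.pi ^ 2 / ⟪α, α⟫ = 2 * q * Real.pi := by
          rw [hq]; field_simp; ring
        linarith
      have hεA : ε ≤ 4 * Real.pi ^ 2 / ⟪α, α⟫ := by
        rw [hε, div_le_div_iff₀ hCpos hA]
        nlinarith [hCb α hα]
      have hδ'b : (⟪δ - stbPC α, δ - stbPC α⟫ : ℝ) ≤ n * ε := by
        push_cast at hb ⊢
        rw [e1]
        linarith
      have ihd := ih (δ - stbPC α) hδ'mem hδ'b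
      have hsplit : (⟪H, δ⟫ : ℝ) = ⟪H, δ - stbPC α⟫ + q * ⟪α, H⟫ := by
        rw [inner_sub_right]
        have : (⟪H, stbPC α⟫ : ℝ) = q * ⟪α, H⟫ := by
          rw [stbPC, real_inner_smul_right, ← hq, real_inner_comm]
        rw [this]
        ring
      have hHα : -Real.pi ≤ (⟪α, H⟫ : ℝ) := by
        have := hH (-α) (stb_neg_mem Φ hne hrefl hα)
        rw [inner_neg_left] at this
        linarith
      have t1 : q * (-Real.pi) ≤ q * ⟪α, H⟫ := by nlinarith
      have t2 : (0:ℝ) ≤ q * (g - 2 * Real.pi) := by nlinarith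
      rw [hsplit]
      rw [e1] at ihd
      nlinarith
  exact key N δ hδ hbound

/-- the equality case of the Voronoi inequality produces a wall through `H`. -/
lemma stb_voronoi_eq
    (hne : ∀ α ∈ Φ, α ≠ 0)
    (hrefl : ∀ α ∈ Φ, ∀ β ∈ Φ, β - (2 * ⟪β, α⟫ / ⟪α, α⟫) • α ∈ Φ)
    (hint : ∀ α ∈ Φ, ∀ β ∈ Φ, ∃ n : ℤ, 2 * ⟪β, α⟫ / ⟪α, α⟫ = (n : ℝ))
    (H : E) (hH : ∀ α ∈ Φ, ⟪α, H⟫ ≤ Real.pi)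
    {δ : E}
    (hδ : δ ∈ AddSubgroup.closure ((fun α : E => (2 * Real.pi / ⟪α, α⟫) • α) '' Φ))
    (hδ0 : δ ≠ 0)
    (heq : (⟪H, δ⟫ : ℝ) = -(⟪δ, δ⟫ : ℝ) / 2) :
    ∃ α ∈ Φ, (⟪α, H⟫ : ℝ) = -Real.pi ∧ (⟪α, δ⟫ : ℝ) = 2 * Real.pi := by
  have hπ := Real.pi_pos
  obtain ⟨α, hα, hg⟩ := stb_minuscule Φ hne hrefl hint hδ hδ0
  have hA : (0:ℝ) < ⟪α, α⟫ := stb_inner_pos Φ hne hα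
  set q := 2 * Real.pi / (⟪α, α⟫ : ℝ) with hq
  have hqpos : 0 < q := by positivity
  have hqA : q * ⟪α, α⟫ = 2 * Real.pi := by rw [hq]; field_simp
  set g := (⟪α, δ⟫ : ℝ) with hgdef
  have hδ'mem : δ - stbPC α ∈
      AddSubgroup.closure ((fun α : E => (2 * Real.pi / ⟪α, α⟫) • α) '' Φ) := by
    refine sub_mem hδ (AddSubgroup.subset_closure ?_)
    exact ⟨α, hα, rfl⟩
  have e1 : (⟪δ - stbPC α, δ - stbPC α⟫ : ℝ) = ⟪δ, δ⟫ - 2 * q * g + 2 * Real.pi * q := by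
    rw [inner_sub_sub_self]
    have h1 : (⟪δ, stbPC α⟫ : ℝ) = q * g := by
      rw [stbPC, real_inner_smul_right, ← hq, hgdef, real_inner_comm]
    have h1' : (⟪stbPC α, δ⟫ : ℝ) = q * g := by
      rw [stbPC, real_inner_smul_left, ← hq, hgdef]
    have h2 : (⟪stbPC α, stbPC α⟫ : ℝ) = q * (q * ⟪α, α⟫) := by
      rw [stbPC, real_inner_smul_left, real_inner_smul_right, ← hq]
    rw [h1, h1', h2, hqA]
    ring
  have hvor := stb_voronoi Φ hne hrefl hint H hH hδ'mem
  have hsplit : (⟪H, δ⟫ : ℝ) = ⟪H, δ - stbPC α⟫ + q * ⟪α, H⟫ := by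
    rw [inner_sub_right]
    have : (⟪H, stbPC α⟫ : ℝ) = q * ⟪α, H⟫ := by
      rw [stbPC, real_inner_smul_right, ← hq, real_inner_comm]
    rw [this]
    ring
  have hHα : -Real.pi ≤ (⟪α, H⟫ : ℝ) := by
    have := hH (-α) (stb_neg_mem Φ hne hrefl hα)
    rw [inner_neg_left] at this
    linarith
  -- from the equality, q * (⟪α,H⟫ + g - π) ≤ 0
  have hmain : q * ((⟪α, H⟫ : ℝ) + g - Real.pi) ≤ 0 := by
    rw [e1] at hvor
    rw [hsplit] at heq
    nlinarith
  have hαH : (⟪α, H⟫ : ℝ) ≤ Real.pi - g := by nlinarith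
  have h1 : (⟪α, H⟫ : ℝ) = -Real.pi := by linarith
  have h2 : g = 2 * Real.pi := by linarith
  exact ⟨α, hα, h1, h2⟩

/-- The set of focal equivalents is finite. -/
lemma stb_finite
    (hne : ∀ α ∈ Φ, α ≠ 0)
    (hspan : Submodule.span ℝ (Φ : Set E) = ⊤)
    (hint : ∀ α ∈ Φ, ∀ β ∈ Φ, ∃ n : ℤ, 2 * ⟪β, α⟫ / ⟪α, α⟫ = (n : ℝ))
    (H : E) :
    {Y : E | Y - H ∈ AddSubgroup.closure ((fun α : E => (2 * Real.pi / ⟪α, α⟫) • α) '' Φ) ∧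
      ‖Y‖ = ‖H‖}.Finite := by
  classical
  have hπ := Real.pi_pos
  set G : Set E := (fun α : E => (2 * Real.pi / ⟪α, α⟫) • α) '' Φ with hG
  -- the comparison linear map
  set L : E →ₗ[ℝ] ({x // x ∈ Φ} → ℝ) :=
    { toFun := fun x α => ⟪(α : E), x⟫
      map_add' := by intro x y; funext α; simp [inner_add_right]
      map_smul' := by intro c x; funext α; simp [real_inner_smul_right] } with hL
  have hinj : Function.Injective L := by
    intro x y hxy
    have hsub : L (x - y) = 0 := by rw [map_sub, hxy, sub_self]
    have hall : ∀ α ∈ Φ, (⟪α, x - y⟫ : ℝ) = 0 := by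
      intro α hα
      have := congrFun hsub ⟨α, hα⟩
      simpa [hL] using this
    have hz' : ∀ z, z ∈ Submodule.span ℝ (Φ : Set E) → (⟪z, x - y⟫ : ℝ) = 0 := by
      intro z hzmem
      induction hzmem using Submodule.span_induction with
      | mem w hw => exact hall w hw
      | zero => simp
      | add a b _ _ ha hb => rw [inner_add_left, ha, hb]; ring
      | smul c a _ ha => rw [real_inner_smul_left, ha]; ring
    have hz : (⟪x - y, x - y⟫ : ℝ) = 0 := hz' _ (by rw [hspan]; trivial)
    have := inner_self_eq_zero.1 hz
    exact sub_eq_zero.1 this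
  set D : Set E := {δ : E | δ ∈ AddSubgroup.closure G ∧ ‖H + δ‖ = ‖H‖} with hD
  have hDfin : D.Finite := by
    set B : {x // x ∈ Φ} → Set ℝ :=
      fun α => {t : ℝ | (∃ n : ℤ, t = n * Real.pi) ∧ |t| ≤ ‖(α : E)‖ * (2 * ‖H‖)} with hB
    have hBfin : ∀ α, (B α).Finite := by
      intro α
      set M : ℝ := ‖(α : E)‖ * (2 * ‖H‖) with hM
      have hsub : B α ⊆ (fun n : ℤ => (n : ℝ) * Real.pi) ''
          (Set.Icc (-(⌈M / Real.pi⌉)) ⌈M / Real.pi⌉) := by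
        rintro t ⟨⟨n, rfl⟩, hn⟩
        refine ⟨n, ?_, rfl⟩
        rw [abs_mul, abs_of_pos hπ] at hn
        have h1 : |(n:ℝ)| ≤ M / Real.pi := by
          rw [le_div_iff₀ hπ]; exact hn
        have h2 : (|(n:ℝ)| : ℝ) ≤ (⌈M / Real.pi⌉ : ℝ) := le_trans h1 (Int.le_ceil _)
        have h3 : |n| ≤ ⌈M / Real.pi⌉ := by exact_mod_cast h2
        rw [abs_le] at h3
        exact ⟨h3.1, h3.2⟩
      exact Set.Finite.subset (Set.Finite.image _ (Set.finite_Icc _ _)) hsub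
    have hTfin : (Set.pi Set.univ B).Finite := Set.Finite.pi hBfin
    have himg : L '' D ⊆ Set.pi Set.univ B := by
      rintro y ⟨δ, ⟨hδmem, hδnorm⟩, rfl⟩
      intro α _
      constructor
      · exact stb_gen_int Φ hne hint α.2 hδmem
      · have hb1 : ‖δ‖ ≤ 2 * ‖H‖ := by
          have : δ = (H + δ) - H := by abel
          rw [this]
          calc ‖(H + δ) - H‖ ≤ ‖H + δ‖ + ‖H‖ := norm_sub_le _ _
            _ = 2 * ‖H‖ := by rw [hδnorm]; ring
        calc |(⟪(α : E), δ⟫ : ℝ)| ≤ ‖(α : E)‖ * ‖δ‖ := abs_real_inner_le_norm _ _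
          _ ≤ ‖(α : E)‖ * (2 * ‖H‖) := by
              exact mul_le_mul_of_nonneg_left hb1 (norm_nonneg _)
    exact Set.Finite.of_finite_image (Set.Finite.subset hTfin himg) (hinj.injOn)
  have hSD : {Y : E | Y - H ∈ AddSubgroup.closure G ∧ ‖Y‖ = ‖H‖} = (fun δ => H + δ) '' D := by
    ext Y
    constructor
    · rintro ⟨h1, h2⟩
      exact ⟨Y - H, ⟨h1, by simpa using h2⟩, by module⟩
    · rintro ⟨δ, ⟨h1, h2⟩, rfl⟩
      exact ⟨by simpa using h1, h2⟩
  rw [hSD]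
  exact hDfin.image _

end SteinbergAux

/-- Theorem 4.5(ii) of [SS18] / Theorem `thm-steinberg`(ii): if `H` lies in the
closed alcove `{H : ⟨α, H⟩ ≤ π for all α ∈ Φ}` of a crystallographic root system
`Φ`, then the focal equivalents of `H` with respect to the fundamental lattice
`Γ₀` are exactly the orbit of `H` under the subgroup `W₀(H)` of the Weyl group
generated by the reflections `r_α` with `⟨α, H⟩ ∈ πℤ`. -/
theorem focal_equivalents_eq_orbit {E : Type*}
    [NormedAddCommGroup E] [InnerProductSpace ℝ E] [FiniteDimensional ℝ E]
    (Φ : Finset E)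
    (hne : ∀ α ∈ Φ, α ≠ 0)
    (hspan : Submodule.span ℝ (Φ : Set E) = ⊤)
    (hrefl : ∀ α ∈ Φ, ∀ β ∈ Φ, β - (2 * ⟪β, α⟫ / ⟪α, α⟫) • α ∈ Φ)
    (hint : ∀ α ∈ Φ, ∀ β ∈ Φ, ∃ n : ℤ, 2 * ⟪β, α⟫ / ⟪α, α⟫ = (n : ℝ))
    (Γ₀ : AddSubgroup E)
    (hΓ₀ : Γ₀ = AddSubgroup.closure ((fun α : E => (2 * Real.pi / ⟪α, α⟫) • α) '' Φ))
    (H : E) (hH : ∀ α ∈ Φ, ⟪α, H⟫ ≤ Real.pi)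
    (W₀H : Subgroup (E ≃ₗ[ℝ] E))
    (hW₀H : W₀H = Subgroup.closure {w : E ≃ₗ[ℝ] E | ∃ α ∈ Φ,
        (∃ n : ℤ, ⟪α, H⟫ = (n : ℝ) * Real.pi) ∧
        ∀ x : E, w x = x - (2 * ⟪x, α⟫ / ⟪α, α⟫) • α}) :
    {Y : E | Y - H ∈ Γ₀ ∧ ‖Y‖ = ‖H‖} = {Y : E | ∃ w ∈ W₀H, w H = Y} := by
  classical
  have hπ := Real.pi_pos
  subst hΓ₀
  subst hW₀H
  set G : Set E := (fun α : E => (2 * Real.pi / ⟪α, α⟫) • α) '' Φ with hG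
  set Gw : Set (E ≃ₗ[ℝ] E) := {w : E ≃ₗ[ℝ] E | ∃ α ∈ Φ,
      (∃ n : ℤ, ⟪α, H⟫ = (n : ℝ) * Real.pi) ∧
      ∀ x : E, w x = x - (2 * ⟪x, α⟫ / ⟪α, α⟫) • α} with hGw
  -- the basic properties that propagate through the subgroup `W₀(H)`
  have hKgen : ∀ w ∈ Gw, (∀ x : E, ‖w x‖ = ‖x‖) ∧
      (∀ γ ∈ AddSubgroup.closure G, w γ ∈ AddSubgroup.closure G) ∧
      (∀ γ ∈ AddSubgroup.closure G, w⁻¹ γ ∈ AddSubgroup.closure G) ∧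
      w H - H ∈ AddSubgroup.closure G := by
    rintro w ⟨α, hα, ⟨n, hn⟩, hw⟩
    have hA : (0:ℝ) < ⟪α, α⟫ := stb_inner_pos Φ hne hα
    have hwr : ∀ x : E, w x = stbRefl α x := fun x => hw x
    have hisom : ∀ x : E, ‖w x‖ = ‖x‖ := by
      intro x
      rw [hwr x]
      exact stbRefl_norm α hA.ne' x
    have hmap : ∀ γ ∈ AddSubgroup.closure G, w γ ∈ AddSubgroup.closure G := by
      intro γ hγ
      induction hγ using AddSubgroup.closure_induction with
      | mem ψ hψ =>
        obtain ⟨β, hβ, rfl⟩ := hψ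
        apply AddSubgroup.subset_closure
        have hwsm : w ((2 * Real.pi / ⟪β, β⟫) • β) = (2 * Real.pi / ⟪β, β⟫) • (w β) :=
          map_smul w _ _
        have hwβ : w β = β - (2 * ⟪β, α⟫ / ⟪α, α⟫) • α := hw β
        have hwβΦ : w β ∈ Φ := by rw [hwβ]; exact hrefl α hα β hβ
        have hinn : (⟪w β, w β⟫ : ℝ) = ⟪β, β⟫ := by
          rw [hwr β]; exact stbRefl_inner α hA.ne' β β
        refine ⟨w β, hwβΦ, ?_⟩
        show (2 * Real.pi / ⟪w β, w β⟫) • (w β) = w ((2 * Real.pi / ⟪β, β⟫) • β)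
        rw [hinn, hwsm]
      | zero =>
        rw [map_zero]
        exact zero_mem _
      | add x y hx hy ihx ihy =>
        rw [map_add]
        exact add_mem ihx ihy
      | neg x hx ihx =>
        rw [map_neg]
        exact neg_mem ihx
    have hinvol : ∀ x : E, w (w x) = x := by
      intro x
      rw [hwr, hwr]
      exact stbRefl_invol α hA.ne' x
    have hsymm : ∀ x : E, w⁻¹ x = w x := by
      intro x
      have h1 : w⁻¹ x = w.symm x := rfl
      rw [h1, ← hinvol x, LinearEquiv.symm_apply_apply, hinvol x]
    refine ⟨hisom, hmap, ?_, ?_⟩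
    · intro γ hγ
      rw [hsymm γ]
      exact hmap γ hγ
    · have hwH : w H - H = ((-n : ℤ) : ℝ) • stbPC α := by
        rw [hwr H, stbRefl_apply]
        rw [show (⟪H, α⟫ : ℝ) = (n : ℝ) * Real.pi by rw [real_inner_comm]; exact hn]
        rw [stbPC, smul_smul]
        push_cast
        rw [show ((-n : ℝ)) * (2 * Real.pi / ⟪α, α⟫) = -(2 * ((n:ℝ) * Real.pi) / ⟪α, α⟫) by ring]
        rw [neg_smul]
        abel
      rw [hwH]
      rw [Int.cast_smul_eq_zsmul]
      exact zsmul_mem (AddSubgroup.subset_closure (show stbPC α ∈ G from ⟨α, hα, rfl⟩)) _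
  have hK : ∀ w ∈ Subgroup.closure Gw, (∀ x : E, ‖w x‖ = ‖x‖) ∧
      (∀ γ ∈ AddSubgroup.closure G, w γ ∈ AddSubgroup.closure G) ∧
      (∀ γ ∈ AddSubgroup.closure G, w⁻¹ γ ∈ AddSubgroup.closure G) ∧
      w H - H ∈ AddSubgroup.closure G := by
    intro w hwcl
    induction hwcl using Subgroup.closure_induction with
    | mem x hx => exact hKgen x hx
    | one =>
      refine ⟨fun x => rfl, fun γ hγ => hγ, ?_, ?_⟩
      · intro γ hγ
        show (1 : E ≃ₗ[ℝ] E)⁻¹ γ ∈ _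
        rw [inv_one]
        exact hγ
      · show (1 : E ≃ₗ[ℝ] E) H - H ∈ _
        rw [show (1 : E ≃ₗ[ℝ] E) H = H from rfl, sub_self]
        exact zero_mem _
    | mul x y hx hy ihx ihy =>
      obtain ⟨ix, mx, mx', tx⟩ := ihx
      obtain ⟨iy, my, my', ty⟩ := ihy
      refine ⟨fun z => ?_, fun γ hγ => ?_, fun γ hγ => ?_, ?_⟩
      · show ‖x (y z)‖ = ‖z‖
        rw [ix, iy]
      · show x (y γ) ∈ _
        exact mx _ (my _ hγ)
      · show (x * y)⁻¹ γ ∈ _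
        rw [mul_inv_rev]
        show y⁻¹ (x⁻¹ γ) ∈ _
        exact my' _ (mx' _ hγ)
      · show x (y H) - H ∈ _
        have : x (y H) - H = x (y H - H) + (x H - H) := by
          rw [map_sub]
          abel
        rw [this]
        exact add_mem (mx _ ty) tx
    | inv x hx ihx =>
      obtain ⟨ix, mx, mx', tx⟩ := ihx
      refine ⟨fun z => ?_, mx', fun γ hγ => ?_, ?_⟩
      · have : x (x⁻¹ z) = z := by
          show x (x.symm z) = z
          exact x.apply_symm_apply z
        conv_rhs => rw [← this]
        exact (ix _).symm
      · rw [inv_inv]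
        exact mx _ hγ
      · have h1 : x⁻¹ H - H = x⁻¹ (-(x H - H)) := by
          show x.symm H - H = x.symm (-(x H - H))
          rw [map_neg, map_sub, x.symm_apply_apply]
          abel
        rw [h1]
        exact mx' _ (neg_mem tx)
  -- now the set equality
  ext Y
  simp only [Set.mem_setOf_eq]
  constructor
  · -- hard direction
    rintro ⟨hY1, hY2⟩
    have hSfin := stb_finite Φ hne hspan hint H
    set S : Set E := {Z : E | Z - H ∈ AddSubgroup.closure G ∧ ‖Z‖ = ‖H‖} with hS
    set O : Set E := {Z : E | Z ∈ S ∧ ∃ w ∈ Subgroup.closure Gw, w Y = Z} with hO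
    have hOfin : O.Finite := Set.Finite.subset hSfin (fun Z hZ => hZ.1)
    have hOne : O.Nonempty := ⟨Y, ⟨hY1, hY2⟩, 1, one_mem _, rfl⟩
    obtain ⟨Ym, hYmO, hmin⟩ := Set.exists_min_image O (fun Z => ‖Z - H‖) hOfin hOne
    obtain ⟨⟨hYm1, hYm2⟩, w, hwcl, hwY⟩ := hYmO
    set δ : E := Ym - H with hδdef
    have hYmH : Ym = H + δ := by rw [hδdef]; abel
    have heq : (⟪H, δ⟫ : ℝ) = -(⟪δ, δ⟫ : ℝ) / 2 := by
      have h1 : (⟪H + δ, H + δ⟫ : ℝ) = ⟪H, H⟫ := by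
        rw [real_inner_self_eq_norm_sq, real_inner_self_eq_norm_sq, ← hYmH, hYm2]
      rw [real_inner_add_add_self] at h1
      linarith
    rcases eq_or_ne δ 0 with hδ0 | hδ0
    · -- the minimum is `H` itself
      have hYmH' : Ym = H := by rw [hYmH, hδ0, add_zero]
      refine ⟨w⁻¹, inv_mem hwcl, ?_⟩
      rw [← hYmH', ← hwY]
      show w.symm (w Y) = Y
      exact w.symm_apply_apply Y
    · -- otherwise we can descend, contradicting minimality
      exfalso
      obtain ⟨α, hα, hαH, hαδ⟩ := stb_voronoi_eq Φ hne hrefl hint H hH hYm1 hδ0 heq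
      have hA : (0:ℝ) < ⟪α, α⟫ := stb_inner_pos Φ hne hα
      set r : E ≃ₗ[ℝ] E := stbReflE α hA.ne' with hr
      have hrGw : r ∈ Gw := by
        refine ⟨α, hα, ⟨-1, by rw [hαH]; push_cast; ring⟩, fun x => rfl⟩
      have hrcl : r ∈ Subgroup.closure Gw := Subgroup.subset_closure hrGw
      obtain ⟨risom, rmap, rmap', rtr⟩ := hK r hrcl
      -- the reflected point
      set Z : E := r Ym with hZ
      have hZO : Z ∈ O := by
        refine ⟨⟨?_, ?_⟩, r * w, mul_mem hrcl hwcl, ?_⟩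
        · have h1 : Z - H = r (Ym - H) + (r H - H) := by
            rw [hZ, map_sub]
            abel
          rw [h1]
          exact add_mem (rmap _ hYm1) rtr
        · rw [hZ, risom, hYm2]
        · show r (w Y) = Z
          rw [hwY]
      -- compute the distance decrease
      have hrYm : r Ym = Ym - (2 * Real.pi / ⟪α, α⟫) • α := by
        rw [hr, stbReflE_apply]
        congr 1
        have hYα : (⟪Ym, α⟫ : ℝ) = Real.pi := by
          rw [real_inner_comm, hYmH, inner_add_right, hαH, hαδ]
          ring
        rw [hYα]
      have hZH : Z - H = δ - (2 * Real.pi / ⟪α, α⟫) • α := by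
        rw [hZ, hrYm, hδdef]
        abel
      have hq : (0:ℝ) < 2 * Real.pi / ⟪α, α⟫ := by positivity
      set q : ℝ := 2 * Real.pi / ⟪α, α⟫ with hqdef
      have hqA : q * ⟪α, α⟫ = 2 * Real.pi := by rw [hqdef]; field_simp
      have hsq : ‖Z - H‖ ^ 2 < ‖Ym - H‖ ^ 2 := by
        rw [← real_inner_self_eq_norm_sq, ← real_inner_self_eq_norm_sq, ← hδdef, hZH]
        rw [inner_sub_sub_self]
        have h1 : (⟪δ, q • α⟫ : ℝ) = q * (2 * Real.pi) := by
          rw [real_inner_smul_right, real_inner_comm, hαδ]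
        have h2 : (⟪q • α, δ⟫ : ℝ) = q * (2 * Real.pi) := by
          rw [real_inner_smul_left, hαδ]
        have h3 : (⟪q • α, q • α⟫ : ℝ) = q * (2 * Real.pi) := by
          rw [real_inner_smul_left, real_inner_smul_right, hqA]
        rw [h1, h2, h3]
        nlinarith
      have hlt : ‖Z - H‖ < ‖Ym - H‖ :=
        lt_of_pow_lt_pow_left₀ 2 (norm_nonneg _) hsq
      have := hmin Z hZO
      linarith
  · -- easy direction
    rintro ⟨w, hwcl, rfl⟩
    obtain ⟨isom, _, _, tr⟩ := hK w hwcl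
    exact ⟨tr, isom H⟩
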